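/- Let μ be a probability measure on a finite set and g a bounded measurable function with μ[g] = 0. Then μ[exp(g)] ≤ exp( (1/2) μ[g² exp(|g|)] ). -/

import Mathlib

open Finset

lemma exp_le_one_add_self_add_sq_half_exp_abs (a : ℝ) :
    Real.exp a ≤ 1 + a + a ^ 2 / 2 * Real.exp |a| := by
  rcases le_or_gt 0 a with ha | ha
  · -- case a ≥ 0 : show exp a - 1 - a ≤ a²/2 exp a
    rw [abs_of_nonneg ha]
    have key : ∀ x ∈ Set.Ici (0:ℝ),
        Real.exp x - 1 - x ≤ x ^ 2 / 2 * Real.exp x := by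
      intro x hx
      set f : ℝ → ℝ := fun y => y ^ 2 / 2 * Real.exp y + 1 + y - Real.exp y with hf
      have hmono : MonotoneOn f (Set.Ici 0) := by
        apply monotoneOn_of_deriv_nonneg (convex_Ici 0)
        · fun_prop
        · fun_prop
        · intro y hy
          simp only [interior_Ici, Set.mem_Ioi] at hy
          have hd : deriv f y = y * Real.exp y + y ^ 2 / 2 * Real.exp y + 1 - Real.exp y := by
            simp only [hf]
            rw [deriv_fun_sub (by fun_prop) (by fun_prop), deriv_fun_add (by fun_prop) (by fun_prop),
              deriv_fun_add (by fun_prop) (by fun_prop), deriv_fun_mul (by fun_prop) (by fun_prop)]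
            simp [Real.deriv_exp, mul_comm]
          rw [hd]
          have hpos := Real.exp_pos y
          have h1 : Real.exp y - 1 ≤ y * Real.exp y := by
            have h := Real.add_one_le_exp (-y)
            rw [Real.exp_neg] at h
            have h2 : (1 - y) * Real.exp y ≤ 1 := by
              calc (1 - y) * Real.exp y ≤ (Real.exp y)⁻¹ * Real.exp y :=
                    mul_le_mul_of_nonneg_right (by linarith) hpos.le
                _ = 1 := inv_mul_cancel₀ hpos.ne'
            nlinarith
          nlinarith [Real.exp_pos y, sq_nonneg y]
      have := hmono (Set.self_mem_Ici) hx hx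
      simp only [hf] at this
      simp only [Real.exp_zero] at this
      nlinarith
    have := key a ha
    linarith
  · -- case a < 0 : exp a ≤ 1 + a + a²/2, and a²/2 ≤ a²/2 exp|a|
    have h1 : Real.exp a ≤ 1 + a + a ^ 2 / 2 := by
      set g : ℝ → ℝ := fun y => 1 + y + y ^ 2 / 2 - Real.exp y with hg
      have hanti : AntitoneOn g (Set.Iic 0) := by
        apply antitoneOn_of_deriv_nonpos (convex_Iic 0)
        · fun_prop
        · fun_prop
        · intro y hy
          simp only [interior_Iic, Set.mem_Iio] at hy
          have hd : deriv g y = 1 + y - Real.exp y := by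
            simp only [hg]
            rw [deriv_fun_sub (by fun_prop) (by fun_prop), deriv_fun_add (by fun_prop) (by fun_prop),
              deriv_fun_add (by fun_prop) (by fun_prop)]
            simp [Real.deriv_exp]
          rw [hd]
          have := Real.add_one_le_exp y
          linarith
      have := hanti (Set.mem_Iic.2 ha.le) Set.self_mem_Iic ha.le
      simp only [hg, Real.exp_zero] at this
      linarith
    have h2 : a ^ 2 / 2 ≤ a ^ 2 / 2 * Real.exp |a| := by
      nlinarith [Real.one_le_exp (abs_nonneg a), sq_nonneg a]
    linarith

/-- if `μ` is a probability measure on a finite set and `μ[g] = 0`, then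
`μ[exp g] ≤ exp((1/2) μ[g² exp |g|])`. -/
theorem exp_moment_bound_of_mean_zero
    {S : Type*} [Fintype S]
    (μ : S → ℝ) (hμ : ∀ x, 0 ≤ μ x) (hμ1 : ∑ x, μ x = 1)
    (g : S → ℝ) (hg : ∑ x, μ x * g x = 0) :
    ∑ x, μ x * Real.exp (g x)
      ≤ Real.exp ((1 / 2) * ∑ x, μ x * (g x) ^ 2 * Real.exp |g x|) := by
  have step1 : ∑ x, μ x * Real.exp (g x)
      ≤ ∑ x, μ x * (1 + g x + (g x) ^ 2 / 2 * Real.exp |g x|) := by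
    apply Finset.sum_le_sum
    intro x _
    exact mul_le_mul_of_nonneg_left (exp_le_one_add_self_add_sq_half_exp_abs (g x)) (hμ x)
  have step2 : ∑ x, μ x * (1 + g x + (g x) ^ 2 / 2 * Real.exp |g x|)
      = 1 + (1 / 2) * ∑ x, μ x * (g x) ^ 2 * Real.exp |g x| := by
    simp only [mul_add]
    rw [Finset.sum_add_distrib, Finset.sum_add_distrib, Finset.mul_sum]
    simp only [mul_one]
    rw [hμ1, hg]
    ring_nf
  have step3 : 1 + (1 / 2) * ∑ x, μ x * (g x) ^ 2 * Real.exp |g x|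
      ≤ Real.exp ((1 / 2) * ∑ x, μ x * (g x) ^ 2 * Real.exp |g x|) := by
    have := Real.add_one_le_exp ((1 / 2) * ∑ x, μ x * (g x) ^ 2 * Real.exp |g x|)
    linarith
  linarith
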